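/- arXiv:2306.06903 — 2 statements merged into one kernel-verified Lean document; each statement's English description precedes it below -/
import Mathlib

section
/- Let A and B be fuzzy linear codes in F_q^n with A ⊥ B. Then B ⊥ A; that is, Im(A) = {1 − c : c ∈ Im(B)} and A_{1−s} = (B_s)^⊥ for every s ∈ Im(B). Consequently, writing A^⊥ for the unique fuzzy linear code orthogonal to A, one has (A^⊥)^⊥ = A whenever A^⊥ exists. -/
open scoped BigOperators

/-- A fuzzy set in `V`: a membership function with values in `[0,1]`. -/
def IsFuzzySet {V : Type*} (A : V → ℝ) : Prop :=
  ∀ x, 0 ≤ A x ∧ A x ≤ 1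

/-- The upper `α`-level cut of a fuzzy set `A`. -/
def levelCut {V : Type*} (A : V → ℝ) (α : ℝ) : Set V :=
  {x | α ≤ A x}

/-- A set of vectors is an `F`-linear subspace. -/
def IsFLinearSet (F : Type*) {V : Type*} [Field F] [AddCommGroup V] [Module F V]
    (s : Set V) : Prop :=
  ∃ W : Submodule F V, s = (W : Set V)

/-- A fuzzy linear code: a fuzzy set all of whose nonempty upper `α`-level cuts
(for `α ∈ [0,1]`) are linear subspaces. -/
def IsFuzzyLinearCode (F : Type*) {V : Type*} [Field F] [AddCommGroup V] [Module F V]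
    (A : V → ℝ) : Prop :=
  IsFuzzySet A ∧
    ∀ α ∈ Set.Icc (0 : ℝ) 1, (levelCut A α).Nonempty → IsFLinearSet F (levelCut A α)

/-- The Euclidean dual of a set of vectors in `F^n`. -/
def dualSet {F : Type*} [Field F] {n : ℕ} (S : Set (Fin n → F)) : Set (Fin n → F) :=
  {y | ∀ x ∈ S, ∑ i, x i * y i = 0}

/-- `B` is orthogonal to `A` (written `A ⊥ B`): the image of `B` is
`{1 - c : c ∈ Im A}` and `B_{1-t} = (A_t)^⊥` for every `t ∈ Im A`. -/
def FuzzyOrth {F : Type*} [Field F] {n : ℕ} (A B : (Fin n → F) → ℝ) : Prop :=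
  Set.range B = (fun c => 1 - c) '' Set.range A ∧
    ∀ t ∈ Set.range A, levelCut B (1 - t) = dualSet (levelCut A t)

section Aux

variable {F : Type} [Field F] {n : ℕ}

/-- The standard dot-product bilinear form on `Fin n → F`. -/
noncomputable def dotForm : LinearMap.BilinForm F (Fin n → F) :=
  LinearMap.mk₂ F (fun x y => ∑ i, x i * y i)
    (by intro x x' y; simp [add_mul, Finset.sum_add_distrib])
    (by intro c x y; simp [Finset.mul_sum, mul_assoc])
    (by intro x y y'; simp [mul_add, Finset.sum_add_distrib])
    (by intro c x y; simp [Finset.mul_sum, mul_comm, mul_left_comm])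

lemma dotForm_apply (x y : Fin n → F) : dotForm x y = ∑ i, x i * y i := rfl

lemma dotForm_refl : (dotForm (F := F) (n := n)).IsRefl := by
  intro x y h
  rw [dotForm_apply] at h ⊢
  simpa [mul_comm] using h

lemma dotForm_nondegenerate : (dotForm (F := F) (n := n)).Nondegenerate := by
  constructor
  · intro x hx
    ext i
    have := hx (Pi.single i 1)
    rw [dotForm_apply] at this
    simpa [Pi.single_apply, Finset.sum_ite_eq'] using this
  · intro x hx
    ext i
    have := hx (Pi.single i 1)
    rw [dotForm_apply] at this
    simpa [Pi.single_apply, Finset.sum_ite_eq'] using this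

lemma dualSet_coe (W : Submodule F (Fin n → F)) :
    dualSet (W : Set (Fin n → F)) = (dotForm.orthogonal W : Set (Fin n → F)) := by
  ext y
  simp only [dualSet, Set.mem_setOf_eq, SetLike.mem_coe,
    LinearMap.BilinForm.mem_orthogonal_iff]
  rfl

lemma dualSet_dualSet [Fintype F] (W : Submodule F (Fin n → F)) :
    dualSet (dualSet (W : Set (Fin n → F))) = (W : Set (Fin n → F)) := by
  rw [dualSet_coe, dualSet_coe,
    LinearMap.BilinForm.orthogonal_orthogonal dotForm_nondegenerate dotForm_refl]

end Aux

/-- orthogonality of fuzzy linear codes is symmetric: if `A ⊥ B` then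
`B ⊥ A`, i.e. `Im A = {1 - c : c ∈ Im B}` and `A_{1-s} = (B_s)^⊥` for every `s ∈ Im B`.
(Consequently `(A^⊥)^⊥ = A` whenever the dual `A^⊥` exists.) -/
theorem fuzzyOrth_symm
    {F : Type} [Field F] [Fintype F] {n : ℕ} (hn : 0 < n)
    (A B : (Fin n → F) → ℝ)
    (hA : IsFuzzyLinearCode F A) (hB : IsFuzzyLinearCode F B)
    (hAB : FuzzyOrth A B) :
    FuzzyOrth B A := by
  obtain ⟨hIm, hcut⟩ := hAB
  constructor
  · rw [hIm, Set.image_image]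
    simp
  · intro s hs
    rw [hIm] at hs
    obtain ⟨t, ht, rfl⟩ := hs
    obtain ⟨x, hx⟩ := ht
    have ht01 : t ∈ Set.Icc (0 : ℝ) 1 := ⟨hx ▸ (hA.1 x).1, hx ▸ (hA.1 x).2⟩
    have hne : (levelCut A t).Nonempty := ⟨x, le_of_eq hx.symm⟩
    obtain ⟨W, hW⟩ := hA.2 t ht01 hne
    have h1 : (1 : ℝ) - (1 - t) = t := by ring
    rw [h1, hcut t ⟨x, hx⟩, hW, dualSet_dualSet]
end

section
/- Let N ≥ 1 and let m ≥ 3 be an odd integer. Let C_0 ⊊ C_1 ⊊ ⋯ ⊊ C_m be a strictly increasing chain of F_2-linear subspaces of F_2^N with {0} ⊊ C_0, C_m = F_2^N, and C_r^⊥ = C_{m−r−1} for all 0 ≤ r ≤ m−1 (the binary Reed–Muller codes C_r = R(r, m) of length N = 2^m satisfy all of these hypotheses). Then there exist real numbers 1 > α_0 > α_1 > ⋯ > α_{(m−3)/2} > 1/2 and a fuzzy self-dual code A in F_2^N such that A_1 = {0}, A_{1/2} = C_{(m−1)/2}, and A_{α_r} = C_r for all 0 ≤ r ≤ (m−3)/2.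 -/
open scoped BigOperators

/-- A fuzzy self-orthogonal code: a fuzzy linear code with `|Im A| > 1` such that
`(A_{1-α})^⊥ = A_α` for every `α ∈ Im A`. -/
def IsFuzzySelfOrthogonal {F : Type*} [Field F] {n : ℕ} (A : (Fin n → F) → ℝ) : Prop :=
  IsFuzzyLinearCode F A ∧ 1 < (Set.range A).ncard ∧
    ∀ α ∈ Set.range A, dualSet (levelCut A (1 - α)) = levelCut A α

/-- A fuzzy self-dual code: a fuzzy self-orthogonal code such that `(A_β)^⊥ = A_β`
for some `β ∈ Im A`. -/
def IsFuzzySelfDual {F : Type*} [Field F] {n : ℕ} (A : (Fin n → F) → ℝ) : Prop :=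
  IsFuzzySelfOrthogonal A ∧ ∃ β ∈ Set.range A, dualSet (levelCut A β) = levelCut A β

/-- The chain `C` extended by `⊥` at index `0`. -/
def extChain {N : ℕ} (C : ℕ → Submodule (ZMod 2) (Fin N → ZMod 2)) :
    ℕ → Submodule (ZMod 2) (Fin N → ZMod 2)
  | 0 => ⊥
  | r + 1 => C r

lemma dualSet_univ_eq {n : ℕ} :
    dualSet (Set.univ : Set (Fin n → ZMod 2)) = {0} := by
  ext y
  simp only [dualSet, Set.mem_setOf_eq, Set.mem_singleton_iff]
  constructor
  · intro h
    funext i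
    have h2 := h (Pi.single i 1) (Set.mem_univ _)
    simpa [Pi.single_apply, ite_mul] using h2
  · rintro rfl x _
    simp

lemma dualSet_zero_eq {n : ℕ} :
    dualSet ({0} : Set (Fin n → ZMod 2)) = Set.univ := by
  ext y
  simp [dualSet]

/-- odd case, Reed–Muller-type chains: given a strictly increasing chain
`{0} ⊊ C 0 ⊊ C 1 ⊊ ⋯ ⊊ C m = F_2^N` of binary linear codes with
`(C r)^⊥ = C (m - r - 1)` for `0 ≤ r ≤ m - 1`, where `m ≥ 3` is odd, there are reals
`1 > α 0 > ⋯ > α ((m-3)/2) > 1/2` and a fuzzy self-dual code `A` in `F_2^N` with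
`A_1 = {0}`, `A_{1/2} = C ((m-1)/2)`, and `A_{α r} = C r` for `0 ≤ r ≤ (m-3)/2`. -/
theorem fuzzySelfDual_of_ReedMuller_chain_odd
    {N m : ℕ} (hN : 1 ≤ N) (hm : 3 ≤ m) (hmodd : Odd m)
    (C : ℕ → Submodule (ZMod 2) (Fin N → ZMod 2))
    (hchain : ∀ r < m, C r < C (r + 1))
    (h0 : ⊥ < C 0)
    (htop : C m = ⊤)
    (hdual : ∀ r ≤ m - 1,
      dualSet (C r : Set (Fin N → ZMod 2)) = (C (m - r - 1) : Set (Fin N → ZMod 2))) :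
    ∃ α : ℕ → ℝ,
      α 0 < 1 ∧ (∀ r < (m - 3) / 2, α (r + 1) < α r) ∧ 1 / 2 < α ((m - 3) / 2) ∧
      ∃ A : (Fin N → ZMod 2) → ℝ,
        IsFuzzySelfDual A ∧
        levelCut A 1 = {0} ∧
        levelCut A (1 / 2) = (C ((m - 1) / 2) : Set (Fin N → ZMod 2)) ∧
        ∀ r ≤ (m - 3) / 2, levelCut A (α r) = (C r : Set (Fin N → ZMod 2)) := by
  classical
  obtain ⟨k, hk⟩ := hmodd
  have hk1 : 1 ≤ k := by omega
  set D := extChain C with hDdef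
  have hD0 : D 0 = ⊥ := rfl
  have hDs : ∀ r, D (r + 1) = C r := fun r => rfl
  have hDlt : ∀ r < m + 1, D r < D (r + 1) := by
    intro r hr
    cases r with
    | zero => simpa [hD0, hDs] using h0
    | succ s => simpa [hDs] using hchain s (by omega)
  have hDle : ∀ a b, a ≤ b → b ≤ m + 1 → D a ≤ D b := by
    intro a b hab hb
    induction b with
    | zero =>
      have : a = 0 := by omega
      simp [this]
    | succ n ih =>
      rcases Nat.lt_or_ge a (n + 1) with h | h
      · exact le_trans (ih (by omega) (by omega)) (hDlt n (by omega)).le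
      · have : a = n + 1 := by omega
        simp [this]
  have hDtop : D (m + 1) = ⊤ := by rw [hDs]; exact htop
  set e : (Fin N → ZMod 2) → ℕ := fun x => sInf {r | x ∈ D r} with hedef
  have hene : ∀ x : Fin N → ZMod 2, {r | x ∈ D r}.Nonempty := by
    intro x
    exact ⟨m + 1, by simp [Set.mem_setOf_eq, hDtop]⟩
  have hemem : ∀ x, x ∈ D (e x) := fun x => Nat.sInf_mem (hene x)
  have hemin : ∀ x r, x ∈ D r → e x ≤ r := fun x r h => Nat.sInf_le h
  have hetop : ∀ x, e x ≤ m + 1 := fun x => hemin x _ (by simp [hDtop])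
  have hiff : ∀ x r, r ≤ m + 1 → (x ∈ D r ↔ e x ≤ r) := by
    intro x r hr
    exact ⟨hemin x r, fun h => hDle _ _ h hr (hemem x)⟩
  have hm1pos : (0 : ℝ) < (m : ℝ) + 1 := by positivity
  set A : (Fin N → ZMod 2) → ℝ := fun x => 1 - (e x : ℝ) / ((m : ℝ) + 1) with hAdef
  -- the key level-cut computation
  have hcut : ∀ j : ℕ, j ≤ m + 1 →
      levelCut A (1 - (j : ℝ) / ((m : ℝ) + 1)) = (D j : Set (Fin N → ZMod 2)) := by
    intro j hj
    ext x
    simp only [levelCut, Set.mem_setOf_eq, hAdef, SetLike.mem_coe]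
    rw [hiff x j hj, sub_le_sub_iff_left, div_le_div_iff_of_pos_right hm1pos]
    exact Nat.cast_le
  -- general level cuts are submodules
  have hcutgen : ∀ β : ℝ, 0 ≤ β → β ≤ 1 →
      ∃ W : Submodule (ZMod 2) (Fin N → ZMod 2), levelCut A β = (W : Set _) := by
    intro β hβ0 hβ1
    refine ⟨D (min (⌊(1 - β) * ((m : ℝ) + 1)⌋₊) (m + 1)), ?_⟩
    ext x
    simp only [levelCut, Set.mem_setOf_eq, hAdef, SetLike.mem_coe]
    rw [hiff x _ (min_le_right _ _)]
    have ht0 : 0 ≤ (1 - β) * ((m : ℝ) + 1) := by nlinarith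
    constructor
    · intro h
      have h1 : (e x : ℝ) / ((m : ℝ) + 1) ≤ 1 - β := by linarith
      have h2 : (e x : ℝ) ≤ (1 - β) * ((m : ℝ) + 1) := (div_le_iff₀ hm1pos).1 h1
      exact le_min (Nat.le_floor h2) (hetop x)
    · intro h
      have h2 : e x ≤ ⌊(1 - β) * ((m : ℝ) + 1)⌋₊ := le_trans h (min_le_left _ _)
      have h1 : (e x : ℝ) ≤ (1 - β) * ((m : ℝ) + 1) :=
        le_trans (Nat.cast_le.2 h2) (Nat.floor_le ht0)
      have h3 : (e x : ℝ) / ((m : ℝ) + 1) ≤ 1 - β := (div_le_iff₀ hm1pos).2 (by linarith)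
      linarith
  -- duality on the extended chain
  have hdualD : ∀ j ≤ m + 1,
      dualSet (D (m + 1 - j) : Set (Fin N → ZMod 2)) = (D j : Set (Fin N → ZMod 2)) := by
    intro j hj
    rcases Nat.eq_zero_or_pos j with rfl | hj0
    · have h1 : (D (m + 1 - 0) : Set (Fin N → ZMod 2)) = Set.univ := by
        rw [Nat.sub_zero, hDtop]; simp
      have h2 : (D 0 : Set (Fin N → ZMod 2)) = {0} := by rw [hD0]; simp
      rw [h1, dualSet_univ_eq, h2]
    · rcases eq_or_lt_of_le hj with rfl | hjm
      · have h1 : (D (m + 1 - (m + 1)) : Set (Fin N → ZMod 2)) = {0} := by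
          rw [Nat.sub_self, hD0]; simp
        have h2 : (D (m + 1) : Set (Fin N → ZMod 2)) = Set.univ := by rw [hDtop]; simp
        rw [h1, dualSet_zero_eq, h2]
      · have hjle : j ≤ m := by omega
        have h1 : m + 1 - j = (m - j) + 1 := by omega
        have h3 : m - (m - j) - 1 = j - 1 := by omega
        have h4 : (j - 1) + 1 = j := by omega
        calc dualSet (D (m + 1 - j) : Set (Fin N → ZMod 2))
            = dualSet (C (m - j) : Set (Fin N → ZMod 2)) := by rw [h1, hDs]
          _ = (C (m - (m - j) - 1) : Set (Fin N → ZMod 2)) := hdual (m - j) (by omega)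
          _ = (D j : Set (Fin N → ZMod 2)) := by
              rw [h3, ← h4, hDs, Nat.add_sub_cancel]
  -- A is a fuzzy set
  have hfuzzy : IsFuzzySet A := by
    intro x
    have h1 : (e x : ℝ) ≤ (m : ℝ) + 1 := by exact_mod_cast hetop x
    have h2 : (e x : ℝ) / ((m : ℝ) + 1) ≤ 1 := by rw [div_le_one hm1pos]; exact h1
    have h3 : 0 ≤ (e x : ℝ) / ((m : ℝ) + 1) := by positivity
    exact ⟨by simp only [hAdef]; linarith, by simp only [hAdef]; linarith⟩
  have hflc : IsFuzzyLinearCode (ZMod 2) A := by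
    refine ⟨hfuzzy, fun β hβ _ => ?_⟩
    exact hcutgen β hβ.1 hβ.2
  -- range facts
  have hA0 : A 0 = 1 := by
    have h1 : e 0 = 0 := Nat.le_zero.1 (hemin 0 0 (by simp [hD0]))
    simp [hAdef, h1]
  obtain ⟨x0, hx0C, hx0ne⟩ := SetLike.exists_of_lt h0
  have hex0 : e x0 = 1 := by
    have h1 : e x0 ≤ 1 := hemin x0 1 (by rw [hDs]; exact hx0C)
    have h2 : e x0 ≠ 0 := by
      intro h
      apply hx0ne
      have h3 := hemem x0
      rw [h, hD0] at h3
      simpa using h3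
    omega
  have hAx0 : A x0 = 1 - 1 / ((m : ℝ) + 1) := by simp [hAdef, hex0]
  have hfin : (Set.range A).Finite := by
    apply ((Set.finite_Iic (m + 1)).image (fun j : ℕ => 1 - (j : ℝ) / ((m : ℝ) + 1))).subset
    rintro γ ⟨x, rfl⟩
    exact ⟨e x, hetop x, rfl⟩
  have hncard : 1 < (Set.range A).ncard := by
    rw [Set.one_lt_ncard_iff hfin]
    refine ⟨1, 1 - 1 / ((m : ℝ) + 1), ⟨0, hA0⟩, ⟨x0, hAx0⟩, ?_⟩
    have : (0 : ℝ) < 1 / ((m : ℝ) + 1) := by positivity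
    linarith
  -- self-orthogonality
  have hortho : ∀ γ ∈ Set.range A, dualSet (levelCut A (1 - γ)) = levelCut A γ := by
    rintro γ ⟨x, rfl⟩
    have hj : e x ≤ m + 1 := hetop x
    have hc1 : ((m + 1 - e x : ℕ) : ℝ) = (m : ℝ) + 1 - (e x : ℝ) := by
      rw [Nat.cast_sub hj]; push_cast; ring
    have hAx : A x = 1 - (e x : ℝ) / ((m : ℝ) + 1) := rfl
    have h1 : (1 : ℝ) - A x = 1 - ((m + 1 - e x : ℕ) : ℝ) / ((m : ℝ) + 1) := by
      rw [hAx, hc1]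
      field_simp
    rw [h1, hcut _ (by omega), hAx, hcut _ hj]
    exact hdualD (e x) hj
  -- 1/2 facts
  have hm2 : (m : ℝ) + 1 = 2 * ((k : ℝ) + 1) := by
    rw [hk]; push_cast; ring
  have hhalf : (1 : ℝ) / 2 = 1 - ((k + 1 : ℕ) : ℝ) / ((m : ℝ) + 1) := by
    rw [hm2]; push_cast
    have hkpos : ((k : ℝ) + 1) ≠ 0 := by positivity
    field_simp
    ring
  obtain ⟨x1, hx1in, hx1out⟩ := SetLike.exists_of_lt (hDlt k (by omega))
  have hex1 : e x1 = k + 1 := by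
    have h1 : e x1 ≤ k + 1 := hemin x1 (k + 1) hx1in
    have h2 : ¬ e x1 ≤ k := fun h => hx1out (hDle _ _ h (by omega) (hemem x1))
    omega
  have hAx1 : A x1 = 1 / 2 := by
    have : A x1 = 1 - ((k + 1 : ℕ) : ℝ) / ((m : ℝ) + 1) := by
      simp only [hAdef, hex1]
    rw [this, ← hhalf]
  have hself : dualSet (levelCut A (1 / 2)) = levelCut A (1 / 2) := by
    have h1 := hdualD (k + 1) (by omega)
    rw [show m + 1 - (k + 1) = k + 1 from by omega] at h1
    rw [hhalf, hcut (k + 1) (by omega)]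
    exact h1
  -- assemble
  refine ⟨fun r => 1 - ((r : ℝ) + 1) / ((m : ℝ) + 1), ?_, ?_, ?_, A,
    ⟨⟨hflc, hncard, hortho⟩, 1 / 2, ⟨x1, hAx1⟩, hself⟩, ?_, ?_, ?_⟩
  · show 1 - (((0 : ℕ) : ℝ) + 1) / ((m : ℝ) + 1) < 1
    have : (0 : ℝ) < (((0 : ℕ) : ℝ) + 1) / ((m : ℝ) + 1) := by positivity
    linarith
  · intro r _
    show 1 - (((r + 1 : ℕ) : ℝ) + 1) / ((m : ℝ) + 1) < 1 - (((r : ℕ) : ℝ) + 1) / ((m : ℝ) + 1)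
    apply sub_lt_sub_left
    rw [div_lt_div_iff_of_pos_right hm1pos]
    push_cast
    linarith
  · have hk2 : (m - 3) / 2 = k - 1 := by omega
    rw [hk2]
    show (1 : ℝ) / 2 < 1 - (((k - 1 : ℕ) : ℝ) + 1) / ((m : ℝ) + 1)
    have hc : ((k - 1 : ℕ) : ℝ) = (k : ℝ) - 1 := by
      rw [Nat.cast_sub hk1]; push_cast; ring
    rw [hc, hm2]
    have hc2 : ((k : ℝ) - 1 + 1) / (2 * ((k : ℝ) + 1)) < 1 / 2 := by
      rw [div_lt_iff₀ (by positivity)]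
      have : (0 : ℝ) ≤ (k : ℝ) := Nat.cast_nonneg k
      nlinarith
    linarith
  · rw [show (1 : ℝ) = 1 - ((0 : ℕ) : ℝ) / ((m : ℝ) + 1) from by simp,
      hcut 0 (by omega), hD0]
    simp
  · rw [hhalf, hcut (k + 1) (by omega), hDs]
    rw [show (m - 1) / 2 = k from by omega]
  · intro r hr
    have hr' : r + 1 ≤ m + 1 := by omega
    show levelCut A (1 - ((r : ℝ) + 1) / ((m : ℝ) + 1)) = (C r : Set (Fin N → ZMod 2))
    have heq : (1 : ℝ) - ((r : ℝ) + 1) / ((m : ℝ) + 1)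
        = 1 - ((r + 1 : ℕ) : ℝ) / ((m : ℝ) + 1) := by push_cast; ring
    rw [heq, hcut (r + 1) hr', hDs]
end
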